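/- Let 1 < p < q and suppose u₁ ∈ W^{1,p}₀(Ω) satisfies ‖u₁‖_p = 1 and ‖∇u₁‖_p^p = λ₁ (first eigenfunction normalization), with u₁ also lying in L^q_μ with ‖∇u₁‖_{q,μ}^q = K < ∞. If f satisfies F(x,s) ≤ (ε/p)|s|^p for |s| ≤ δ and 0 ≤ t·u₁(x) ≤ δ on Ω, then φ₊(t·u₁) ≤ t^p(λ₁ − λ + ε)/p + (t^q/q)·K, where φ₊(u) = ∫_Ω [ (1/p)|∇u|^p + (μ(x)/q)|∇u|^q ] dx − ∫_Ω H₊(x,u) dx and H₊(x,s) = λ s^p/p − F(x,s) for 0 ≤ s ≤ ū with δ < ū. -/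

import Mathlib

open MeasureTheory

set_option autoImplicit false

/-- The key energy estimate (6): if `u₁` is the normalized first eigenfunction
(`‖u₁‖_p = 1`, `‖∇u₁‖_p^p = λ₁`, `‖∇u₁‖_{q,μ}^q = K`), `F(x,s) ≤ (ε/p)|s|^p` for
`|s| ≤ δ` and `0 ≤ t u₁ ≤ δ < ū` a.e., then
`φ₊(t u₁) ≤ t^p (λ₁ − λ + ε)/p + (t^q/q) K`, where
`φ₊(u) = ∫ (1/p)|∇u|^p + (μ/q)|∇u|^q dx − ∫ H₊(x,u) dx` and
`H₊(x,s) = λ s^p/p − F(x,s)` for `0 ≤ s ≤ ū`. -/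
theorem stmt17 {Ω : Type*} [MeasurableSpace Ω] (ν : Measure Ω) {N : ℕ}
    (p q lam lam1 K eps delta ubar t : ℝ)
    (hp : 1 < p) (hpq : p < q) (hlam : 0 < lam)
    (heps : 0 < eps) (hdelta : 0 < delta) (hdu : delta < ubar) (ht : 0 < t)
    (μ : Ω → ℝ) (hμ : ∀ x, 0 ≤ μ x)
    (u₁ : Ω → ℝ) (g₁ : Ω → EuclideanSpace ℝ (Fin N))
    (hu₁pos : ∀ᵐ x ∂ν, 0 ≤ u₁ x)
    (hnorm : ∫ x, |u₁ x| ^ p ∂ν = 1)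
    (heig : ∫ x, ‖g₁ x‖ ^ p ∂ν = lam1)
    (hK : ∫ x, μ x * ‖g₁ x‖ ^ q ∂ν = K)
    (F : Ω → ℝ → ℝ)
    (hFsmall : ∀ᵐ x ∂ν, ∀ s : ℝ, |s| ≤ delta → F x s ≤ eps / p * |s| ^ p)
    (hsmall : ∀ᵐ x ∂ν, t * u₁ x ≤ delta)
    (hint1 : Integrable (fun x => ‖g₁ x‖ ^ p) ν)
    (hint2 : Integrable (fun x => μ x * ‖g₁ x‖ ^ q) ν)
    (hint3 : Integrable (fun x => |u₁ x| ^ p) ν)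
    (hint4 : Integrable (fun x => F x (t * u₁ x)) ν) :
    (∫ x, (1 / p * ‖t • g₁ x‖ ^ p + μ x / q * ‖t • g₁ x‖ ^ q) ∂ν) -
      (∫ x, (lam * (t * u₁ x) ^ p / p - F x (t * u₁ x)) ∂ν) ≤
    t ^ p * ((lam1 - lam + eps) / p) + t ^ q / q * K := by
  have hp0 : 0 < p := lt_trans one_pos hp
  have ht0 : 0 ≤ t := ht.le
  -- first integral
  have e1 : ∀ x, 1 / p * ‖t • g₁ x‖ ^ p + μ x / q * ‖t • g₁ x‖ ^ q
      = t ^ p / p * ‖g₁ x‖ ^ p + t ^ q / q * (μ x * ‖g₁ x‖ ^ q) := by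
    intro x
    rw [norm_smul, Real.norm_eq_abs, abs_of_pos ht,
      Real.mul_rpow ht0 (norm_nonneg _), Real.mul_rpow ht0 (norm_nonneg _)]
    ring
  have I1 : (∫ x, (1 / p * ‖t • g₁ x‖ ^ p + μ x / q * ‖t • g₁ x‖ ^ q) ∂ν)
      = t ^ p / p * lam1 + t ^ q / q * K := by
    simp_rw [e1]
    rw [integral_add (hint1.const_mul _) (hint2.const_mul _),
      integral_const_mul, integral_const_mul, heig, hK]
  -- second integral
  have e2 : ∀ᵐ x ∂ν, lam * (t * u₁ x) ^ p / p - F x (t * u₁ x)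
      = lam * t ^ p / p * |u₁ x| ^ p - F x (t * u₁ x) := by
    filter_upwards [hu₁pos] with x hx
    rw [Real.mul_rpow ht0 hx, abs_of_nonneg hx]
    ring_nf
  have I2 : (∫ x, (lam * (t * u₁ x) ^ p / p - F x (t * u₁ x)) ∂ν)
      = lam * t ^ p / p - ∫ x, F x (t * u₁ x) ∂ν := by
    rw [integral_congr_ae e2, integral_sub (hint3.const_mul _) hint4,
      integral_const_mul, hnorm, mul_one]
  -- bound on ∫ F
  have hFb : (∫ x, F x (t * u₁ x) ∂ν) ≤ eps * t ^ p / p := by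
    have hmono : (∫ x, F x (t * u₁ x) ∂ν)
        ≤ ∫ x, eps / p * (t ^ p * |u₁ x| ^ p) ∂ν := by
      refine integral_mono_ae hint4 ((hint3.const_mul _).const_mul _) ?_
      filter_upwards [hFsmall, hsmall, hu₁pos] with x hF hs hx
      have habs : |t * u₁ x| = t * u₁ x := abs_of_nonneg (mul_nonneg ht0 hx)
      have := hF (t * u₁ x) (by rw [habs]; exact hs)
      calc F x (t * u₁ x) ≤ eps / p * |t * u₁ x| ^ p := this
        _ = eps / p * (t ^ p * |u₁ x| ^ p) := by
            rw [habs, Real.mul_rpow ht0 hx, abs_of_nonneg hx]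
    calc (∫ x, F x (t * u₁ x) ∂ν) ≤ _ := hmono
      _ = eps / p * (t ^ p * ∫ x, |u₁ x| ^ p ∂ν) := by
          simp_rw [integral_const_mul]
      _ = eps * t ^ p / p := by rw [hnorm]; ring
  rw [I1, I2]
  have hEq : t ^ p * ((lam1 - lam + eps) / p)
      = t ^ p / p * lam1 - lam * t ^ p / p + eps * t ^ p / p := by
    field_simp
  linarith [hFb]
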